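/- arXiv:2605.14820 — 2 statements merged into one kernel-verified Lean document; each statement's English description precedes it below -/
import Mathlib

section
/- The displacement operators and displaced parity operators are Fourier transforms of each other: (1/d) Σ_{α,β ∈ Z/dZ} D(α,β,0) ω(βγ − αδ) = P(γ,δ) for all γ,δ ∈ Z/dZ. -/
open Matrix Complex BigOperators Finset Subgroup

noncomputable section

/-- The phase `ω(a) = exp(2πia/d)` for `a : ZMod d`. -/
def ω (d : ℕ) (a : ZMod d) : ℂ := Complex.exp (2 * Real.pi * Complex.I * (a.val : ℂ) / d)

/-- The clock operator `Z`, with `Z|j⟩ = ω(j)|j⟩`. -/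
def Zop (d : ℕ) : Matrix (ZMod d) (ZMod d) ℂ := Matrix.diagonal (fun j => ω d j)

/-- The shift operator `X`, with `X|j⟩ = |j+1⟩`. -/
def Xop (d : ℕ) : Matrix (ZMod d) (ZMod d) ℂ :=
  Matrix.of fun j k => if j = k + 1 then 1 else 0

/-- The finite Fourier transform, with entries `F_{jk} = ω(jk)/√d`. -/
def Fop (d : ℕ) : Matrix (ZMod d) (ZMod d) ℂ :=
  Matrix.of fun j k => ω d (j * k) / Real.sqrt d

/-- `2⁻¹ = (d+1)/2` in `ZMod d` (for odd `d`). -/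
def half (d : ℕ) : ZMod d := (((d + 1) / 2 : ℕ) : ZMod d)

/-- The general displacement operator `D(α,β,γ) = ω(γ - 2⁻¹αβ) Z^α X^β`. -/
def Dop (d : ℕ) [NeZero d] (α β γ : ZMod d) : Matrix (ZMod d) (ZMod d) ℂ :=
  ω d (γ - half d * (α * β)) • (Zop d ^ α.val * Xop d ^ β.val)

/-- The parity operator `P = F²`. -/
def Pop (d : ℕ) [NeZero d] : Matrix (ZMod d) (ZMod d) ℂ := Fop d ^ 2

/-- The displacement-parity operator `𝔇(α,β,γ,ν) = D(α,β,γ) P^ν`. -/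
def DPop (d : ℕ) [NeZero d] (α β γ : ZMod d) (ν : ZMod 2) : Matrix (ZMod d) (ZMod d) ℂ :=
  Dop d α β γ * Pop d ^ ν.val

/-- The sign `(-1)^ν` in `ZMod d`, for `ν : ZMod 2`. -/
def sgn (d : ℕ) (ν : ZMod 2) : ZMod d := (-1 : ZMod d) ^ ν.val

/-- The Heisenberg-Weyl group, as a subgroup of the units of the matrix ring,
generated by (in fact, consisting of) the displacement operators `D(α,β,γ)`. -/
def HW (d : ℕ) [NeZero d] : Subgroup (Matrix (ZMod d) (ZMod d) ℂ)ˣ :=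
  Subgroup.closure {u | ∃ α β γ : ZMod d, (u : Matrix (ZMod d) (ZMod d) ℂ) = Dop d α β γ}

/-- The subgroup of phases `ω(a)·1`. -/
def Phases (d : ℕ) [NeZero d] : Subgroup (Matrix (ZMod d) (ZMod d) ℂ)ˣ :=
  Subgroup.closure {u | ∃ a : ZMod d, (u : Matrix (ZMod d) (ZMod d) ℂ) = ω d a • (1 : Matrix (ZMod d) (ZMod d) ℂ)}

/-- The Heisenberg-Weyl-parity group, as a subgroup of the units of the matrix ring,
generated by (in fact, consisting of) the operators `𝔇(α,β,γ,ν)`. -/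
def HWP (d : ℕ) [NeZero d] : Subgroup (Matrix (ZMod d) (ZMod d) ℂ)ˣ :=
  Subgroup.closure {u | ∃ (α β γ : ZMod d) (ν : ZMod 2),
    (u : Matrix (ZMod d) (ZMod d) ℂ) = DPop d α β γ ν}

section Helpers
variable {d : ℕ} [NeZero d]

def eroot (d : ℕ) : ℂ := Complex.exp (2 * Real.pi * Complex.I / d)

lemma eroot_prim : IsPrimitiveRoot (eroot d) d := by
  simpa [eroot, mul_comm, mul_assoc, mul_left_comm] using
    Complex.isPrimitiveRoot_exp d (NeZero.ne d)

lemma eroot_pow_d : eroot d ^ d = 1 := eroot_prim.pow_eq_one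

lemma ω_eq (a : ZMod d) : ω d a = eroot d ^ a.val := by
  rw [ω, eroot, ← Complex.exp_nat_mul]
  congr 1
  ring

lemma eroot_pow_mod (n : ℕ) : eroot d ^ (n % d) = eroot d ^ n := by
  conv_rhs => rw [← Nat.div_add_mod n d]
  rw [pow_add, pow_mul, eroot_pow_d, one_pow, one_mul]

lemma ω_natCast (n : ℕ) : ω d (n : ZMod d) = eroot d ^ n := by
  rw [ω_eq, ZMod.val_natCast, eroot_pow_mod]

lemma ω_add (a b : ZMod d) : ω d (a + b) = ω d a * ω d b := by
  rw [ω_eq, ω_eq, ω_eq, ZMod.val_add, eroot_pow_mod, pow_add]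

lemma ω_pow (a : ZMod d) (n : ℕ) : ω d a ^ n = ω d (n * a) := by
  conv_rhs => rw [← ZMod.natCast_rightInverse a, ← Nat.cast_mul, ω_natCast]
  rw [ω_eq, ← pow_mul, mul_comm]

lemma sum_zmod (f : ZMod d → ℂ) : ∑ a : ZMod d, f a = ∑ i ∈ Finset.range d, f i := by
  refine Finset.sum_nbij' (fun a => a.val) (fun i => (i : ZMod d)) ?_ ?_ ?_ ?_ ?_
  · intro a _; exact Finset.mem_range.mpr a.val_lt
  · intro i _; exact Finset.mem_univ _
  · intro a _; exact ZMod.natCast_rightInverse a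
  · intro i hi; exact ZMod.val_cast_of_lt (Finset.mem_range.mp hi)
  · intro a _; rw [ZMod.natCast_rightInverse a]

lemma sum_ω (t : ZMod d) : ∑ α : ZMod d, ω d (α * t) = if t = 0 then (d : ℂ) else 0 := by
  have key : ∀ α : ZMod d, ω d (α * t) = (eroot d ^ t.val) ^ α.val := by
    intro α
    conv_lhs => rw [← ZMod.natCast_rightInverse α, ← ZMod.natCast_rightInverse t,
      ← Nat.cast_mul, ω_natCast, pow_mul]
    exact pow_right_comm _ _ _
  simp only [key]
  rw [sum_zmod (fun a => (eroot d ^ t.val) ^ a.val)]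
  have : ∀ i ∈ Finset.range d, (eroot d ^ t.val) ^ (((i : ℕ) : ZMod d)).val
      = (eroot d ^ t.val) ^ i := by
    intro i hi; rw [ZMod.val_cast_of_lt (Finset.mem_range.mp hi)]
  rw [Finset.sum_congr rfl this]
  split_ifs with h
  · simp [h, ZMod.val_zero]
  · have ht0 : 0 < t.val := Nat.pos_of_ne_zero (fun hv => h (by
      have := ZMod.natCast_rightInverse t
      rw [hv] at this; simpa using this.symm))
    have hne : eroot d ^ t.val ≠ 1 :=
      (eroot_prim).pow_ne_one_of_pos_of_lt ht0.ne' t.val_lt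
    rw [geom_sum_eq hne, ← pow_mul, mul_comm, pow_mul, eroot_pow_d, one_pow]
    simp

lemma Xpow_apply (n : ℕ) (j k : ZMod d) :
    (Xop d ^ n) j k = if j = k + (n : ZMod d) then 1 else 0 := by
  induction n generalizing j k with
  | zero => simp [Matrix.one_apply]
  | succ n ih =>
    rw [pow_succ, Matrix.mul_apply]
    have h1 : ∀ b : ZMod d, (Xop d ^ n) j b * Xop d b k
        = if b = k + 1 then (Xop d ^ n) j b else 0 := by
      intro b; rw [Xop]; simp only [Matrix.of_apply, mul_ite, mul_one, mul_zero]
    rw [Finset.sum_congr rfl fun b _ => h1 b,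
      Finset.sum_ite_eq' Finset.univ (k + 1) (fun b => (Xop d ^ n) j b),
      if_pos (Finset.mem_univ _), ih]
    have hc : (((n + 1 : ℕ)) : ZMod d) = (n : ZMod d) + 1 := by push_cast; ring
    rw [hc, add_assoc, add_comm (1 : ZMod d) (n : ZMod d)]

lemma Dop_apply (α β γ j k : ZMod d) :
    Dop d α β γ j k = ω d (γ - half d * (α * β) + α * j) * (if j = k + β then 1 else 0) := by
  rw [Dop, Matrix.smul_apply, Zop, Matrix.diagonal_pow, Matrix.diagonal_mul,
    Xpow_apply, ZMod.natCast_rightInverse β]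
  simp only [Pi.pow_apply]
  rw [ω_pow, smul_eq_mul, ω_add, ZMod.natCast_rightInverse α]
  ring

lemma two_mul_half (hodd : Odd d) : (2 : ZMod d) * half d = 1 := by
  have h2 : 2 * ((d + 1) / 2) = d + 1 := by
    obtain ⟨k, hk⟩ := hodd
    omega
  rw [half, ← Nat.cast_ofNat, ← Nat.cast_mul, h2]
  push_cast
  simp [ZMod.natCast_self]

lemma Pop_apply (j k : ZMod d) : Pop d j k = if j + k = 0 then 1 else 0 := by
  rw [Pop, sq, Matrix.mul_apply]
  have hs : ∀ m : ZMod d, Fop d j m * Fop d m k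
      = ω d (m * (j + k)) * ((1:ℂ) / d) := by
    intro m
    rw [Fop]
    simp only [Matrix.of_apply]
    rw [div_mul_div_comm, ← ω_add]
    have : (Real.sqrt d : ℂ) * Real.sqrt d = (d : ℂ) := by
      rw [← Complex.ofReal_mul, Real.mul_self_sqrt (Nat.cast_nonneg d)]
      simp
    rw [this]
    ring_nf
  rw [Finset.sum_congr rfl (fun m _ => hs m), ← Finset.sum_mul, sum_ω]
  split_ifs with h
  · field_simp
    exact div_self (Nat.cast_ne_zero.mpr (NeZero.ne d))
  · simp


end Helpers

/-- Fourier transform relation between displacement operators and displaced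
parity operators: `(1/d) Σ_{α,β} D(α,β,0) ω(βγ - αδ) = P(γ,δ)`. -/

theorem displacement_fourier_displaced_parity (d : ℕ) [NeZero d] (hodd : Odd d)
    (γ δ : ZMod d) :
    (1 / (d : ℂ)) • ∑ α : ZMod d, ∑ β : ZMod d, ω d (β * γ - α * δ) • Dop d α β 0
      = Dop d (2 * γ) (2 * δ) 0 * Pop d := by
  have h2 := two_mul_half (d := d) hodd
  have hd0 : (d : ℂ) ≠ 0 := Nat.cast_ne_zero.mpr (NeZero.ne d)
  ext j k
  -- RHS
  have hR : (Dop d (2 * γ) (2 * δ) 0 * Pop d) j k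
      = ω d (0 - half d * (2 * γ * (2 * δ)) + 2 * γ * j) * (if j = -k + 2 * δ then 1 else 0) := by
    rw [Matrix.mul_apply]
    have hm : ∀ m : ZMod d, Dop d (2 * γ) (2 * δ) 0 j m * Pop d m k
        = if m = -k then Dop d (2 * γ) (2 * δ) 0 j m else 0 := by
      intro m
      rw [Pop_apply]
      by_cases hm : m = -k
      · rw [if_pos (by rw [hm]; ring), if_pos hm, mul_one]
      · rw [if_neg (fun hc => hm (by linear_combination hc)), if_neg hm, mul_zero]
    rw [Finset.sum_congr rfl fun m _ => hm m,
      Finset.sum_ite_eq' Finset.univ (-k) (fun m => Dop d (2 * γ) (2 * δ) 0 j m),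
      if_pos (Finset.mem_univ _), Dop_apply]
  -- LHS inner sums
  have hL : ((1 / (d : ℂ)) • ∑ α : ZMod d, ∑ β : ZMod d, ω d (β * γ - α * δ) • Dop d α β 0) j k
      = (1 / (d : ℂ)) * (ω d ((j - k) * γ) *
          (if j - half d * (j - k) - δ = 0 then (d : ℂ) else 0)) := by
    rw [Matrix.smul_apply, Matrix.sum_apply]
    simp only [Matrix.sum_apply, Matrix.smul_apply, Dop_apply, smul_eq_mul]
    have hβ : ∀ α : ZMod d, ∑ β : ZMod d, ω d (β * γ - α * δ) *
          (ω d (0 - half d * (α * β) + α * j) * (if j = k + β then 1 else 0))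
        = ω d ((j - k) * γ - α * δ) * ω d (0 - half d * (α * (j - k)) + α * j) := by
      intro α
      have hb : ∀ β : ZMod d, ω d (β * γ - α * δ) *
            (ω d (0 - half d * (α * β) + α * j) * (if j = k + β then 1 else 0))
          = if β = j - k then ω d (β * γ - α * δ) * ω d (0 - half d * (α * β) + α * j) else 0 := by
        intro β
        by_cases hβ' : β = j - k
        · rw [if_pos (by rw [hβ']; ring), if_pos hβ']; ring
        · rw [if_neg (fun hc => hβ' (by linear_combination -hc)), if_neg hβ', mul_zero, mul_zero]
      rw [Finset.sum_congr rfl fun β _ => hb β,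
        Finset.sum_ite_eq' Finset.univ (j - k)
          (fun β => ω d (β * γ - α * δ) * ω d (0 - half d * (α * β) + α * j)),
        if_pos (Finset.mem_univ _)]
    rw [Finset.sum_congr rfl fun α _ => hβ α]
    have hα : ∀ α : ZMod d, ω d ((j - k) * γ - α * δ) * ω d (0 - half d * (α * (j - k)) + α * j)
        = ω d ((j - k) * γ) * ω d (α * (j - half d * (j - k) - δ)) := by
      intro α
      rw [← ω_add, ← ω_add]
      congr 1
      ring
    rw [Finset.sum_congr rfl fun α _ => hα α, ← Finset.mul_sum, sum_ω]
  rw [hL, hR]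
  -- condition equivalence
  have hcond : (j - half d * (j - k) - δ = 0) ↔ (j = -k + 2 * δ) := by
    constructor
    · intro h
      have h2t : (2 : ZMod d) * (j - half d * (j - k) - δ) = j + k - 2 * δ := by
        linear_combination (k - j) * h2
      rw [h, mul_zero] at h2t
      linear_combination -h2t
    · intro h
      have : (2 : ZMod d) * (j - half d * (j - k) - δ) = 0 := by
        linear_combination (k - j) * h2 + h
      calc j - half d * (j - k) - δ
          = half d * ((2 : ZMod d) * (j - half d * (j - k) - δ)) := by
            linear_combination (δ + half d * (j - k) - j) * h2
        _ = 0 := by rw [this, mul_zero]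
  by_cases hc : j = -k + 2 * δ
  · rw [if_pos (hcond.mpr hc), if_pos hc, mul_one]
    field_simp
    congr 1
    linear_combination 2 * γ * δ * h2 - γ * hc
  · rw [if_neg (fun h => hc (hcond.mp h)), if_neg hc]
    simp
end
end

section
/- The Heisenberg-Weyl-parity group HWP(d) is solvable of derived length 3, with derived series HWP(d) ⊵ HW(d) ⊵ {ω(a)·1} ⊵ {1}; moreover HWP(d) is not nilpotent, since [HWP(d), HW(d)] = HW(d). -/
open Matrix Complex BigOperators Finset Subgroup

noncomputable section

namespace HWPaux
set_option linter.unreachableTactic false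
set_option linter.unusedTactic false
set_option linter.unusedSectionVars false
variable (d : ℕ) [NeZero d]
open scoped commutatorElement

def e (n : ℕ) : ℂ := Complex.exp (2 * Real.pi * Complex.I * (n : ℂ) / d)

lemma e_add (m n : ℕ) : e d (m + n) = e d m * e d n := by
  simp only [e, ← Complex.exp_add]; congr 1; push_cast; ring

lemma e_d_mul (k : ℕ) : e d (d * k) = 1 := by
  have hd : (d : ℂ) ≠ 0 := Nat.cast_ne_zero.mpr (NeZero.ne d)
  have h : (2 * Real.pi * Complex.I * ((d * k : ℕ) : ℂ) / d) = (k : ℤ) * (2 * Real.pi * Complex.I) := by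
    push_cast; field_simp
  rw [e, h, Complex.exp_int_mul_two_pi_mul_I]

lemma ω_natCast (n : ℕ) : ω d (n : ZMod d) = e d n := by
  have h : ((n : ZMod d)).val = n % d := ZMod.val_natCast d n
  have h2 : n = d * (n / d) + n % d := (Nat.div_add_mod n d).symm
  show e d ((n : ZMod d)).val = e d n
  rw [h]; conv_rhs => rw [h2]
  rw [e_add, e_d_mul, one_mul]

lemma natCast_val (a : ZMod d) : ((a.val : ℕ) : ZMod d) = a := (ZMod.natCast_val a).trans (ZMod.cast_id d a)

lemma ω_add (a b : ZMod d) : ω d (a + b) = ω d a * ω d b := by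
  conv_lhs => rw [← natCast_val d a, ← natCast_val d b, ← Nat.cast_add, ω_natCast]
  rw [e_add, ← ω_natCast, ← ω_natCast, natCast_val, natCast_val]

lemma ω_zero : ω d 0 = 1 := by
  rw [← Nat.cast_zero, ω_natCast]; simp [e]

lemma ω_pow (a : ZMod d) (n : ℕ) : ω d a ^ n = ω d ((n : ZMod d) * a) := by
  induction n with
  | zero => simp [ω_zero]
  | succ n ih =>
    rw [pow_succ, ih, ← ω_add]; congr 1; push_cast; ring

lemma ω_ne_one (a : ZMod d) (ha : a ≠ 0) : ω d a ≠ 1 := by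
  intro h
  rw [ω, Complex.exp_eq_one_iff] at h
  obtain ⟨n, hn⟩ := h
  have hd : (d : ℂ) ≠ 0 := Nat.cast_ne_zero.mpr (NeZero.ne d)
  have hpi : (2 * (Real.pi:ℂ) * Complex.I) ≠ 0 := by
    simp [Real.pi_ne_zero, Complex.I_ne_zero]
  rw [div_eq_iff hd] at hn
  rw [show (n:ℂ) * (2 * (Real.pi:ℂ) * Complex.I) * d = (2 * (Real.pi:ℂ) * Complex.I) * ((n:ℂ) * d) by ring] at hn
  have hv : (a.val : ℂ) = ((n * d : ℤ) : ℂ) := by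
    have := mul_left_cancel₀ hpi hn
    push_cast; exact this
  have hvz : (a.val : ℤ) = n * d := by exact_mod_cast hv
  have h1 : a.val ≠ 0 := fun h0 => ha ((ZMod.val_eq_zero a).mp h0)
  have h2 : a.val < d := ZMod.val_lt a
  have hd3 : (0:ℤ) < (d:ℤ) := by exact_mod_cast Nat.pos_of_ne_zero (NeZero.ne d)
  have h1' : (0:ℤ) < (a.val:ℤ) := by exact_mod_cast Nat.pos_of_ne_zero h1
  have h2' : ((a.val:ℤ)) < (d:ℤ) := by exact_mod_cast h2
  rcases le_or_gt n 0 with h | h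
  · have : n * (d:ℤ) ≤ 0 := mul_nonpos_of_nonpos_of_nonneg h (le_of_lt hd3)
    linarith
  · have h' : (1:ℤ) ≤ n := h
    have : (d:ℤ) ≤ n * d := le_mul_of_one_le_left (le_of_lt hd3) h'
    linarith

/-- the basic matrix form of `Z^a X^b` -/
def M (a b : ZMod d) : Matrix (ZMod d) (ZMod d) ℂ :=
  Matrix.of fun j k => if j = k + b then ω d (a * j) else 0

lemma Xpow (n : ℕ) : Xop d ^ n = Matrix.of fun j k => if j = k + (n : ZMod d) then 1 else 0 := by
  induction n with
  | zero => ext j k; simp [Matrix.one_apply, eq_comm]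
  | succ n ih =>
    rw [pow_succ, ih]
    ext j k
    rw [Matrix.mul_apply]
    rw [Finset.sum_eq_single (k + 1)]
    · push_cast; simp [Xop, add_comm, add_assoc, add_left_comm]
    · intro b _ hb; simp [Xop, hb]
    · simp


lemma Zpow (n : ℕ) : Zop d ^ n = Matrix.diagonal fun j => ω d ((n : ZMod d) * j) := by
  rw [Zop, Matrix.diagonal_pow]
  ext j k
  rw [Matrix.diagonal_apply, Matrix.diagonal_apply]
  split_ifs with h
  · rw [Pi.pow_apply, ω_pow]
  · rfl

lemma ZXpow (a b : ZMod d) : Zop d ^ a.val * Xop d ^ b.val = M d a b := by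
  rw [Zpow, Xpow, natCast_val, natCast_val]
  ext j k
  rw [Matrix.diagonal_mul]
  simp only [Matrix.of_apply, M, mul_ite, mul_one, mul_zero]

lemma M_mul (a b a' b' : ZMod d) :
    M d a b * M d a' b' = ω d (-(a' * b)) • M d (a + a') (b + b') := by
  ext j k
  rw [Matrix.mul_apply, Finset.sum_eq_single (k + b')]
  · simp only [M, Matrix.of_apply, Matrix.smul_apply, smul_eq_mul, eq_self_iff_true, if_true]
    by_cases h : j = k + (b + b')
    · rw [if_pos (show j = k + b' + b by rw [h]; ring), if_pos h, ← ω_add, ← ω_add]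
      congr 1
      rw [h]; ring
    · rw [if_neg (fun hc => h (by linear_combination hc)), if_neg h, zero_mul, mul_zero]
  · intro l _ hl
    simp only [M, Matrix.of_apply]
    rw [if_neg hl, mul_zero]
  · simp

lemma Dop_eq (α β γ : ZMod d) : Dop d α β γ = ω d (γ - half d * (α * β)) • M d α β := by
  rw [Dop, ZXpow]

lemma two_half (hodd : Odd d) : (2 : ZMod d) * half d = 1 := by
  obtain ⟨k, hk⟩ := hodd
  have h1 : (d + 1) / 2 = k + 1 := by omega
  rw [half, h1]
  calc (2 : ZMod d) * ((k + 1 : ℕ) : ZMod d) = ((2 * (k + 1) : ℕ) : ZMod d) := by push_cast; ring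
  _ = ((d + 1 : ℕ) : ZMod d) := by congr 1; omega
  _ = 1 := by push_cast [ZMod.natCast_self]; ring

lemma Dop_mul (hodd : Odd d) (α β γ α' β' γ' : ZMod d) :
    Dop d α β γ * Dop d α' β' γ' =
      Dop d (α + α') (β + β') (γ + γ' + half d * (α * β' - α' * β)) := by
  have h2 := two_half d hodd
  rw [Dop_eq, Dop_eq, Dop_eq, Matrix.smul_mul, Matrix.mul_smul, M_mul, smul_smul, smul_smul,
    ← ω_add, ← ω_add]
  congr 2
  linear_combination (α' * β) * h2

lemma Dop_zero : Dop d 0 0 0 = 1 := by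
  rw [Dop_eq]
  have : M d 0 0 = 1 := by
    ext j k
    simp [M, Matrix.one_apply, zero_mul, ω_zero, eq_comm]
  rw [this]
  simp [ω_zero]

lemma Dop_phase (a : ZMod d) : Dop d 0 0 a = ω d a • 1 := by
  rw [Dop_eq]
  have : M d 0 0 = 1 := by
    ext j k
    simp [M, Matrix.one_apply, zero_mul, ω_zero, eq_comm]
  rw [this]
  congr 1
  ring_nf

lemma sum_ω (c : ZMod d) : ∑ l : ZMod d, ω d (l * c) = if c = 0 then (d : ℂ) else 0 := by
  by_cases hc : c = 0
  · subst hc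
    simp [mul_zero, ω_zero, ZMod.card]
  · rw [if_neg hc]
    have key : (∑ l : ZMod d, ω d (l * c)) = ω d c * ∑ l : ZMod d, ω d (l * c) := by
      rw [Finset.mul_sum]
      exact Fintype.sum_bijective (fun l => l - 1) (Equiv.subRight (1 : ZMod d)).bijective _ _
        (fun l => by rw [← ω_add]; congr 1; ring)
    have h0 : (ω d c - 1) * (∑ l : ZMod d, ω d (l * c)) = 0 := by
      rw [sub_mul, one_mul, sub_eq_zero]; exact key.symm
    rcases mul_eq_zero.mp h0 with h | h
    · exact absurd (sub_eq_zero.mp h) (ω_ne_one d c hc)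
    · exact h

lemma Pop_eq : Pop d = Matrix.of fun j k => if j + k = 0 then 1 else 0 := by
  have hd : (d : ℂ) ≠ 0 := Nat.cast_ne_zero.mpr (NeZero.ne d)
  have hs : (Real.sqrt d : ℂ) * (Real.sqrt d : ℂ) = (d : ℂ) := by
    rw [← Complex.ofReal_mul, Real.mul_self_sqrt (Nat.cast_nonneg d)]
    simp
  rw [Pop, sq]
  ext j k
  rw [Matrix.mul_apply]
  have step : ∀ l : ZMod d, Fop d j l * Fop d l k = ω d (l * (j + k)) / d := by
    intro l
    simp only [Fop, Matrix.of_apply]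
    rw [div_mul_div_comm, hs, ← ω_add]
    congr 2
    ring
  rw [Finset.sum_congr rfl (fun l _ => step l), ← Finset.sum_div, sum_ω]
  by_cases h : j + k = 0 <;> simp [Matrix.of_apply, h, hd]

lemma Pop_mul_Pop : Pop d * Pop d = 1 := by
  rw [Pop_eq]
  ext j k
  rw [Matrix.mul_apply, Finset.sum_eq_single (-k)]
  · simp only [Matrix.of_apply, Matrix.one_apply]
    rw [if_pos (show -k + k = 0 by ring), mul_one]
    by_cases h : j = k
    · rw [if_pos (show j + -k = 0 by rw [h]; ring), if_pos h]
    · rw [if_neg (fun hc : j + -k = 0 => h (by linear_combination hc)), if_neg h]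
  · intro l _ hl
    simp only [Matrix.of_apply]
    rw [if_neg (fun hc : l + k = 0 => hl (by linear_combination hc)), mul_zero]
  · simp

lemma Pop_M (a b : ZMod d) : Pop d * M d a b = M d (-a) (-b) * Pop d := by
  rw [Pop_eq]
  ext j k
  rw [Matrix.mul_apply, Matrix.mul_apply, Finset.sum_eq_single (-j), Finset.sum_eq_single (-k)]
  · simp only [M, Matrix.of_apply]
    rw [if_pos (show j + -j = 0 by ring), if_pos (show -k + k = 0 by ring), one_mul, mul_one]
    by_cases h : -j = k + b
    · rw [if_pos h, if_pos (show j = -k + -b by linear_combination -h)]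
      congr 1; ring
    · rw [if_neg h, if_neg (fun hc : j = -k + -b => h (by linear_combination -hc))]
  · intro l _ hl
    simp only [M, Matrix.of_apply]
    first
      | rw [if_neg (fun hc : j + l = 0 => hl (by linear_combination hc)), zero_mul]
      | rw [if_neg (fun hc : l + k = 0 => hl (by linear_combination hc)), mul_zero]
  · simp [M, Matrix.of_apply]
  · intro l _ hl
    simp only [M, Matrix.of_apply]
    first
      | rw [if_neg (fun hc : j + l = 0 => hl (by linear_combination hc)), zero_mul]
      | rw [if_neg (fun hc : l + k = 0 => hl (by linear_combination hc)), mul_zero]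
  · simp [M, Matrix.of_apply]

lemma Pop_Dop (α β γ : ZMod d) : Pop d * Dop d α β γ = Dop d (-α) (-β) γ * Pop d := by
  rw [Dop_eq, Dop_eq, Matrix.mul_smul, Matrix.smul_mul, Pop_M]
  congr 2
  ring

lemma zmod2_cases (ν : ZMod 2) : ν = 0 ∨ ν = 1 := by revert ν; decide

lemma sgn_zero : sgn d 0 = 1 := pow_zero _
lemma sgn_one : sgn d 1 = (-1 : ZMod d) := pow_one _

lemma DPop_nu_zero (α β γ : ZMod d) : DPop d α β γ 0 = Dop d α β γ := by
  rw [DPop, ZMod.val_zero, pow_zero, mul_one]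

lemma DPop_nu_one (α β γ : ZMod d) : DPop d α β γ 1 = Dop d α β γ * Pop d := by
  rw [DPop, ZMod.val_one, pow_one]

lemma Dop_congr {a b c a' b' c' : ZMod d} (h1 : a = a') (h2 : b = b') (h3 : c = c') :
    Dop d a b c = Dop d a' b' c' := by rw [h1, h2, h3]

lemma DPop_congr {a b c a' b' c' : ZMod d} {n n' : ZMod 2} (h1 : a = a') (h2 : b = b')
    (h3 : c = c') (h4 : n = n') : DPop d a b c n = DPop d a' b' c' n' := by rw [h1, h2, h3, h4]

lemma DPop_mul (hodd : Odd d) (α β γ α' β' γ' : ZMod d) (ν ν' : ZMod 2) :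
    DPop d α β γ ν * DPop d α' β' γ' ν' =
      DPop d (α + sgn d ν * α') (β + sgn d ν * β')
        (γ + γ' + half d * (α * (sgn d ν * β') - sgn d ν * α' * β)) (ν + ν') := by
  have hP := Pop_mul_Pop d
  rcases zmod2_cases ν with rfl | rfl <;> rcases zmod2_cases ν' with rfl | rfl
  · rw [show (0 + 0 : ZMod 2) = 0 from rfl, DPop_nu_zero, DPop_nu_zero, DPop_nu_zero,
      Dop_mul d hodd, sgn_zero]
    exact Dop_congr d (by ring) (by ring) (by ring)
  · rw [show (0 + 1 : ZMod 2) = 1 from rfl, DPop_nu_zero, DPop_nu_one, DPop_nu_one,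
      ← mul_assoc, Dop_mul d hodd, sgn_zero]
    exact congrArg (· * Pop d) (Dop_congr d (by ring) (by ring) (by ring))
  · rw [show (1 + 0 : ZMod 2) = 1 from rfl, DPop_nu_one, DPop_nu_zero, DPop_nu_one,
      mul_assoc, Pop_Dop, ← mul_assoc, Dop_mul d hodd, sgn_one]
    exact congrArg (· * Pop d) (Dop_congr d (by ring) (by ring) (by ring))
  · rw [show (1 + 1 : ZMod 2) = 0 from rfl, DPop_nu_one, DPop_nu_one, DPop_nu_zero,
      mul_assoc (Dop d α β γ) (Pop d), ← mul_assoc (Pop d), Pop_Dop, mul_assoc _ (Pop d) (Pop d),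
      hP, mul_one, ← mul_assoc, Dop_mul d hodd, sgn_one]
    exact Dop_congr d (by ring) (by ring) (by ring)

lemma nu_add_self (ν : ZMod 2) : ν + ν = 0 := by
  rcases zmod2_cases ν with rfl | rfl <;> rfl

lemma DPop_id : DPop d 0 0 0 0 = 1 := by rw [DPop_nu_zero, Dop_zero]

lemma sgn_sq (ν : ZMod 2) : sgn d ν * sgn d ν = 1 := by
  rcases zmod2_cases ν with rfl | rfl <;> simp [sgn_zero, sgn_one]

lemma DPop_mul_inv (hodd : Odd d) (α β γ : ZMod d) (ν : ZMod 2) :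
    DPop d α β γ ν * DPop d (-(sgn d ν * α)) (-(sgn d ν * β)) (-γ) ν = 1 := by
  have hs := sgn_sq d ν
  rw [DPop_mul d hodd, DPop_congr d (show α + sgn d ν * -(sgn d ν * α) = 0 by
      linear_combination (-α) * hs)
    (show β + sgn d ν * -(sgn d ν * β) = 0 by linear_combination (-β) * hs)
    (show γ + -γ + half d * (α * (sgn d ν * -(sgn d ν * β)) - sgn d ν * -(sgn d ν * α) * β) = 0 by
      linear_combination (half d * (-(α*β) + α*β)) * hs)
    (nu_add_self ν), DPop_id]

lemma DPop_inv_mul (hodd : Odd d) (α β γ : ZMod d) (ν : ZMod 2) :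
    DPop d (-(sgn d ν * α)) (-(sgn d ν * β)) (-γ) ν * DPop d α β γ ν = 1 := by
  have hs := sgn_sq d ν
  rw [DPop_mul d hodd, DPop_congr d (show -(sgn d ν * α) + sgn d ν * α = 0 by ring)
    (show -(sgn d ν * β) + sgn d ν * β = 0 by ring)
    (show -γ + γ + half d * (-(sgn d ν * α) * (sgn d ν * β) - sgn d ν * α * -(sgn d ν * β)) = 0 by
      ring)
    (nu_add_self ν), DPop_id]

/-- unit built from a displacement-parity operator -/
def dpu (hodd : Odd d) (α β γ : ZMod d) (ν : ZMod 2) : (Matrix (ZMod d) (ZMod d) ℂ)ˣ :=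
  ⟨DPop d α β γ ν, DPop d (-(sgn d ν * α)) (-(sgn d ν * β)) (-γ) ν,
    DPop_mul_inv d hodd α β γ ν, DPop_inv_mul d hodd α β γ ν⟩

lemma dpu_val (hodd : Odd d) (α β γ : ZMod d) (ν : ZMod 2) :
    ((dpu d hodd α β γ ν : (Matrix (ZMod d) (ZMod d) ℂ)ˣ) : Matrix (ZMod d) (ZMod d) ℂ) =
      DPop d α β γ ν := rfl

lemma coe_inv_of_val {Mo : Type*} [Monoid Mo] {u : Moˣ} {w : Mo} (h : w * u.val = 1) :
    ((u⁻¹ : Moˣ) : Mo) = w := by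
  calc ((u⁻¹ : Moˣ) : Mo) = 1 * ((u⁻¹ : Moˣ) : Mo) := (one_mul _).symm
  _ = w * u.val * ((u⁻¹ : Moˣ) : Mo) := by rw [h]
  _ = w * (u.val * ((u⁻¹ : Moˣ) : Mo)) := by rw [mul_assoc]
  _ = w := by rw [Units.mul_inv, mul_one]

lemma unit_inv_val (hodd : Odd d) {u : (Matrix (ZMod d) (ZMod d) ℂ)ˣ} {α β γ : ZMod d}
    {ν : ZMod 2} (h : (u : Matrix (ZMod d) (ZMod d) ℂ) = DPop d α β γ ν) :
    ((u⁻¹ : (Matrix (ZMod d) (ZMod d) ℂ)ˣ) : Matrix (ZMod d) (ZMod d) ℂ) =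
      DPop d (-(sgn d ν * α)) (-(sgn d ν * β)) (-γ) ν :=
  coe_inv_of_val (by
    rw [show u.val = (u : Matrix (ZMod d) (ZMod d) ℂ) from rfl, h]
    exact DPop_inv_mul d hodd α β γ ν)

abbrev Mx (d : ℕ) := Matrix (ZMod d) (ZMod d) ℂ

/-- the HWP set is a subgroup -/
def HWPs (hodd : Odd d) : Subgroup (Mx d)ˣ where
  carrier := {u | ∃ (α β γ : ZMod d) (ν : ZMod 2), (u : Mx d) = DPop d α β γ ν}
  one_mem' := ⟨0, 0, 0, 0, by rw [Units.val_one, DPop_id]⟩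
  mul_mem' := by
    rintro u v ⟨α, β, γ, ν, hu⟩ ⟨α', β', γ', ν', hv⟩
    exact ⟨_, _, _, _, by rw [Units.val_mul, hu, hv, DPop_mul d hodd]⟩
  inv_mem' := by
    rintro u ⟨α, β, γ, ν, hu⟩
    exact ⟨_, _, _, _, unit_inv_val d hodd hu⟩

/-- the HW set is a subgroup -/
def HWs (hodd : Odd d) : Subgroup (Mx d)ˣ where
  carrier := {u | ∃ α β γ : ZMod d, (u : Mx d) = Dop d α β γ}
  one_mem' := ⟨0, 0, 0, by rw [Units.val_one, Dop_zero]⟩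
  mul_mem' := by
    rintro u v ⟨α, β, γ, hu⟩ ⟨α', β', γ', hv⟩
    exact ⟨_, _, _, by rw [Units.val_mul, hu, hv, Dop_mul d hodd]⟩
  inv_mem' := by
    rintro u ⟨α, β, γ, hu⟩
    have h0 : (u : Mx d) = DPop d α β γ 0 := by rw [hu, DPop_nu_zero]
    refine ⟨-α, -β, -γ, ?_⟩
    rw [unit_inv_val d hodd h0, sgn_zero, one_mul, one_mul, DPop_nu_zero]

/-- the phases set is a subgroup -/
def Ps (hodd : Odd d) : Subgroup (Mx d)ˣ where
  carrier := {u | ∃ a : ZMod d, (u : Mx d) = ω d a • (1 : Mx d)}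
  one_mem' := ⟨0, by rw [Units.val_one, ω_zero, one_smul]⟩
  mul_mem' := by
    rintro u v ⟨a, hu⟩ ⟨b, hv⟩
    refine ⟨a + b, ?_⟩
    rw [Units.val_mul, hu, hv, ← Dop_phase, ← Dop_phase, Dop_mul d hodd,
      Dop_congr d (show (0:ZMod d) + 0 = 0 by ring) (show (0:ZMod d) + 0 = 0 by ring)
        (show a + b + half d * (0 * 0 - 0 * 0) = a + b by ring), Dop_phase]
  inv_mem' := by
    rintro u ⟨a, hu⟩
    have h0 : (u : Mx d) = DPop d 0 0 a 0 := by rw [hu, DPop_nu_zero, Dop_phase]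
    refine ⟨-a, ?_⟩
    rw [unit_inv_val d hodd h0, mul_zero, neg_zero, DPop_nu_zero, Dop_phase]

lemma HWP_eq (hodd : Odd d) : HWP d = HWPs d hodd := by
  apply le_antisymm
  · exact Subgroup.closure_le _ |>.mpr (fun u hu => hu)
  · exact fun u hu => Subgroup.subset_closure hu

lemma HW_eq (hodd : Odd d) : HW d = HWs d hodd := by
  apply le_antisymm
  · exact Subgroup.closure_le _ |>.mpr (fun u hu => hu)
  · exact fun u hu => Subgroup.subset_closure hu

lemma Phases_eq (hodd : Odd d) : Phases d = Ps d hodd := by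
  apply le_antisymm
  · exact Subgroup.closure_le _ |>.mpr (fun u hu => hu)
  · exact fun u hu => Subgroup.subset_closure hu

lemma HW_le_HWP (hodd : Odd d) : HW d ≤ HWP d := by
  rw [HW_eq d hodd, HWP_eq d hodd]
  rintro u ⟨α, β, γ, hu⟩
  exact ⟨α, β, γ, 0, by rw [hu, DPop_nu_zero]⟩

/-- value of a commutator of two HWP elements: parity 0 -/
lemma comm_val (hodd : Odd d) {u v : (Mx d)ˣ} {α β γ α' β' γ' : ZMod d} {ν ν' : ZMod 2}
    (hu : (u : Mx d) = DPop d α β γ ν) (hv : (v : Mx d) = DPop d α' β' γ' ν') :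
    ∃ A B C : ZMod d, ((⁅u, v⁆ : (Mx d)ˣ) : Mx d) = DPop d A B C 0 := by
  have hui := unit_inv_val d hodd hu
  have hvi := unit_inv_val d hodd hv
  have step : ((⁅u, v⁆ : (Mx d)ˣ) : Mx d) =
      DPop d α β γ ν * DPop d α' β' γ' ν' * DPop d (-(sgn d ν * α)) (-(sgn d ν * β)) (-γ) ν *
        DPop d (-(sgn d ν' * α')) (-(sgn d ν' * β')) (-γ') ν' := by
    rw [commutatorElement_def, Units.val_mul, Units.val_mul, Units.val_mul, hu, hv, hui, hvi]
  rw [DPop_mul d hodd, DPop_mul d hodd, DPop_mul d hodd] at step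
  exact ⟨_, _, _, step.trans (DPop_congr d rfl rfl rfl (by
    rcases zmod2_cases ν with rfl | rfl <;> rcases zmod2_cases ν' with rfl | rfl <;> rfl))⟩

/-- commutator of two HW elements: explicit phase computation for generators -/
lemma comm_phase (hodd : Odd d) {u v : (Mx d)ˣ} {α β γ α' β' γ' : ZMod d}
    (hu : (u : Mx d) = Dop d α β γ) (hv : (v : Mx d) = Dop d α' β' γ') :
    ∃ c : ZMod d, ((⁅u, v⁆ : (Mx d)ˣ) : Mx d) = Dop d 0 0 c := by
  have hu0 : (u : Mx d) = DPop d α β γ 0 := by rw [hu, DPop_nu_zero]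
  have hv0 : (v : Mx d) = DPop d α' β' γ' 0 := by rw [hv, DPop_nu_zero]
  have hui := unit_inv_val d hodd hu0
  have hvi := unit_inv_val d hodd hv0
  have step : ((⁅u, v⁆ : (Mx d)ˣ) : Mx d) =
      DPop d α β γ 0 * DPop d α' β' γ' 0 * DPop d (-(sgn d 0 * α)) (-(sgn d 0 * β)) (-γ) 0 *
        DPop d (-(sgn d 0 * α')) (-(sgn d 0 * β')) (-γ') 0 := by
    rw [commutatorElement_def, Units.val_mul, Units.val_mul, Units.val_mul, hu0, hv0, hui, hvi]
  rw [DPop_mul d hodd, DPop_mul d hodd, DPop_mul d hodd] at step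
  simp only [show ((0:ZMod 2) + 0) = 0 from rfl, sgn_zero, one_mul] at step
  rw [DPop_nu_zero] at step
  exact ⟨_, step.trans (Dop_congr d (by ring) (by ring) rfl)⟩

lemma comm_val_explicit (hodd : Odd d) (α β γ : ZMod d) (ν : ZMod 2) (α' β' γ' : ZMod d)
    (ν' : ZMod 2) :
    ((⁅dpu d hodd α β γ ν, dpu d hodd α' β' γ' ν'⁆ : (Mx d)ˣ) : Mx d) =
      DPop d α β γ ν * DPop d α' β' γ' ν' * DPop d (-(sgn d ν * α)) (-(sgn d ν * β)) (-γ) ν *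
        DPop d (-(sgn d ν' * α')) (-(sgn d ν' * β')) (-γ') ν' := by
  rw [commutatorElement_def, Units.val_mul, Units.val_mul, Units.val_mul]
  rfl

lemma commA (hodd : Odd d) (a : ZMod d) :
    ((⁅dpu d hodd a 0 0 0, dpu d hodd 0 1 0 0⁆ : (Mx d)ˣ) : Mx d) = Dop d 0 0 a := by
  have h2 := two_half d hodd
  have step := comm_val_explicit d hodd a 0 0 0 0 1 0 0
  rw [DPop_mul d hodd, DPop_mul d hodd, DPop_mul d hodd] at step
  simp only [show ((0:ZMod 2) + 0) = 0 from rfl, sgn_zero, one_mul] at step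
  rw [DPop_nu_zero] at step
  exact step.trans (Dop_congr d (by ring) (by ring) (by linear_combination a * h2))

lemma commB (hodd : Odd d) (α β : ZMod d) :
    ((⁅dpu d hodd 0 0 0 1, dpu d hodd (-(half d * α)) (-(half d * β)) 0 0⁆ : (Mx d)ˣ) : Mx d) =
      Dop d α β 0 := by
  have h2 := two_half d hodd
  have step := comm_val_explicit d hodd 0 0 0 1 (-(half d * α)) (-(half d * β)) 0 0
  rw [DPop_mul d hodd, DPop_mul d hodd, DPop_mul d hodd] at step
  simp only [show ((1:ZMod 2) + 0) = 1 from rfl, show ((1:ZMod 2) + 1) = 0 from rfl,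
    show ((0:ZMod 2) + 0) = 0 from rfl, sgn_zero, sgn_one, one_mul] at step
  rw [DPop_nu_zero] at step
  exact step.trans (Dop_congr d (by linear_combination α * h2) (by linear_combination β * h2)
    (by ring))

lemma comm_Phases (hodd : Odd d) : ⁅Phases d, Phases d⁆ = (⊥ : Subgroup (Mx d)ˣ) := by
  apply le_antisymm _ bot_le
  rw [Subgroup.commutator_le]
  intro g hg h hh
  rw [Phases_eq d hodd] at hg hh
  obtain ⟨a, hg⟩ := hg
  obtain ⟨b, hh⟩ := hh
  rw [Subgroup.mem_bot, commutatorElement_eq_one_iff_mul_comm]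
  apply Units.ext
  rw [Units.val_mul, Units.val_mul, hg, hh, Matrix.smul_mul, Matrix.smul_mul, one_mul, one_mul,
    smul_smul, smul_smul, mul_comm (ω d a) (ω d b)]

lemma comm_HW (hodd : Odd d) : ⁅HW d, HW d⁆ = Phases d := by
  apply le_antisymm
  · rw [Subgroup.commutator_le]
    intro g hg h hh
    rw [HW_eq d hodd] at hg hh
    obtain ⟨α, β, γ, hg⟩ := hg
    obtain ⟨α', β', γ', hh⟩ := hh
    obtain ⟨c, hc⟩ := comm_phase d hodd hg hh
    rw [Phases_eq d hodd]
    exact ⟨c, by rw [hc, Dop_phase]⟩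
  · calc Phases d = Subgroup.closure _ := rfl
    _ ≤ ⁅HW d, HW d⁆ := by
        refine (Subgroup.closure_le _).mpr ?_
        rintro u ⟨a, hu⟩
        have hx : dpu d hodd a 0 0 0 ∈ HW d := by
          rw [HW_eq d hodd]; exact ⟨a, 0, 0, by rw [dpu_val, DPop_nu_zero]⟩
        have hy : dpu d hodd 0 1 0 0 ∈ HW d := by
          rw [HW_eq d hodd]; exact ⟨0, 1, 0, by rw [dpu_val, DPop_nu_zero]⟩
        have heq : u = ⁅dpu d hodd a 0 0 0, dpu d hodd 0 1 0 0⁆ :=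
          Units.ext (hu.trans ((commA d hodd a).trans (Dop_phase d a)).symm)
        rw [heq]
        exact Subgroup.commutator_mem_commutator hx hy

lemma HW_le_K (hodd : Odd d) (K : Subgroup (Mx d)ˣ)
    (hcomm : ∀ {x y : (Mx d)ˣ}, x ∈ HWP d → y ∈ HW d → ⁅x, y⁆ ∈ K)
    (hph : Phases d ≤ K) : HW d ≤ K := by
  calc HW d = Subgroup.closure _ := rfl
  _ ≤ K := by
      refine (Subgroup.closure_le _).mpr ?_
      rintro u ⟨α, β, γ, hu⟩
      have hx : dpu d hodd 0 0 0 1 ∈ HWP d :=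
        Subgroup.subset_closure ⟨0, 0, 0, 1, by rw [dpu_val]⟩
      have hy : dpu d hodd (-(half d * α)) (-(half d * β)) 0 0 ∈ HW d := by
        rw [HW_eq d hodd]
        exact ⟨_, _, _, by rw [dpu_val, DPop_nu_zero]⟩
      have hz : dpu d hodd 0 0 γ 0 ∈ Phases d :=
        Subgroup.subset_closure ⟨γ, by rw [dpu_val, DPop_nu_zero, Dop_phase]⟩
      have heq : u = ⁅dpu d hodd 0 0 0 1, dpu d hodd (-(half d * α)) (-(half d * β)) 0 0⁆ *
          dpu d hodd 0 0 γ 0 := by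
        apply Units.ext
        rw [Units.val_mul, commB d hodd α β, dpu_val, DPop_nu_zero, Dop_mul d hodd, hu]
        exact Dop_congr d (by ring) (by ring) (by ring)
      rw [heq]
      exact K.mul_mem (hcomm hx hy) (hph hz)

lemma comm_HWP (hodd : Odd d) : ⁅HWP d, HWP d⁆ = HW d := by
  apply le_antisymm
  · rw [Subgroup.commutator_le]
    intro g hg h hh
    rw [HWP_eq d hodd] at hg hh
    obtain ⟨α, β, γ, ν, hg⟩ := hg
    obtain ⟨α', β', γ', ν', hh⟩ := hh
    obtain ⟨A, B, C, hc⟩ := comm_val d hodd hg hh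
    rw [HW_eq d hodd]
    exact ⟨A, B, C, by rw [hc, DPop_nu_zero]⟩
  · refine HW_le_K d hodd _ (fun hx hy => ?_) ?_
    · exact Subgroup.commutator_mem_commutator hx (HW_le_HWP d hodd hy)
    · rw [← comm_HW d hodd]
      exact Subgroup.commutator_mono (HW_le_HWP d hodd) (HW_le_HWP d hodd)

lemma comm_HWP_HW (hodd : Odd d) : ⁅HWP d, HW d⁆ = HW d := by
  apply le_antisymm
  · refine le_trans (Subgroup.commutator_mono le_rfl (HW_le_HWP d hodd)) ?_
    exact le_of_eq (comm_HWP d hodd)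
  · refine HW_le_K d hodd _ (fun hx hy => Subgroup.commutator_mem_commutator hx hy) ?_
    rw [← comm_HW d hodd]
    exact Subgroup.commutator_mono (HW_le_HWP d hodd) le_rfl

lemma phase_smul_ne_one (hd : 3 ≤ d) : (ω d 1 • (1 : Mx d)) ≠ 1 := by
  haveI : Fact (1 < d) := ⟨by omega⟩
  intro h
  have h00 := congrArg (fun m : Mx d => m 0 0) h
  simp only [Matrix.smul_apply, Matrix.one_apply_eq, smul_eq_mul, mul_one] at h00
  exact ω_ne_one d 1 one_ne_zero h00

lemma u0_val (hodd : Odd d) :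
    ((dpu d hodd 0 0 1 0 : (Mx d)ˣ) : Mx d) = ω d 1 • (1 : Mx d) := by
  rw [dpu_val, DPop_nu_zero, Dop_phase]

lemma Phases_ne_bot (hodd : Odd d) (hd : 3 ≤ d) : Phases d ≠ ⊥ := by
  intro h
  have hm : dpu d hodd 0 0 1 0 ∈ Phases d :=
    Subgroup.subset_closure ⟨1, u0_val d hodd⟩
  rw [h, Subgroup.mem_bot] at hm
  have := congrArg Units.val hm
  rw [u0_val d hodd] at this
  exact phase_smul_ne_one d hd (this.trans Units.val_one)

lemma HW_ne_bot (hodd : Odd d) (hd : 3 ≤ d) : HW d ≠ ⊥ := by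
  intro h
  have hm : dpu d hodd 0 0 1 0 ∈ HW d :=
    Subgroup.subset_closure ⟨0, 0, 1, by rw [dpu_val, DPop_nu_zero]⟩
  rw [h, Subgroup.mem_bot] at hm
  have := congrArg Units.val hm
  rw [u0_val d hodd] at this
  exact phase_smul_ne_one d hd (this.trans Units.val_one)

lemma HWP_ne_bot (hodd : Odd d) (hd : 3 ≤ d) : HWP d ≠ ⊥ := by
  intro h
  exact HW_ne_bot d hodd hd (le_bot_iff.mp (h ▸ HW_le_HWP d hodd))

lemma map_ds_zero : Subgroup.map (HWP d).subtype (derivedSeries ↥(HWP d) 0) = HWP d := by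
  rw [derivedSeries_zero, ← MonoidHom.range_eq_map, Subgroup.range_subtype]

lemma map_ds_succ (n : ℕ) :
    Subgroup.map (HWP d).subtype (derivedSeries ↥(HWP d) (n + 1)) =
      ⁅Subgroup.map (HWP d).subtype (derivedSeries ↥(HWP d) n),
        Subgroup.map (HWP d).subtype (derivedSeries ↥(HWP d) n)⁆ := by
  rw [derivedSeries_succ, Subgroup.map_commutator]

lemma map_ds_one (hodd : Odd d) :
    Subgroup.map (HWP d).subtype (derivedSeries ↥(HWP d) 1) = HW d := by
  have h := map_ds_succ d 0
  rw [map_ds_zero, comm_HWP d hodd] at h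
  exact h

lemma map_ds_two (hodd : Odd d) :
    Subgroup.map (HWP d).subtype (derivedSeries ↥(HWP d) 2) = Phases d := by
  have h := map_ds_succ d 1
  rw [map_ds_one d hodd, comm_HW d hodd] at h
  exact h

lemma map_ds_three (hodd : Odd d) :
    Subgroup.map (HWP d).subtype (derivedSeries ↥(HWP d) 3) = ⊥ := by
  have h := map_ds_succ d 2
  rw [map_ds_two d hodd, comm_Phases d hodd] at h
  exact h

lemma ds_three_bot (hodd : Odd d) : derivedSeries ↥(HWP d) 3 = ⊥ := by
  have h := map_ds_three d hodd
  rw [Subgroup.map_eq_bot_iff, Subgroup.ker_subtype] at h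
  exact le_bot_iff.mp h

lemma ds_two_ne_bot (hodd : Odd d) (hd : 3 ≤ d) : derivedSeries ↥(HWP d) 2 ≠ ⊥ := by
  intro h
  have hm := map_ds_two d hodd
  rw [h, Subgroup.map_bot] at hm
  exact Phases_ne_bot d hodd hd hm.symm

lemma map_lcs (hodd : Odd d) (m : ℕ) :
    Subgroup.map (HWP d).subtype (Subgroup.lowerCentralSeries (⊤ : Subgroup ↥(HWP d)) (m + 1)) = HW d := by
  induction m with
  | zero =>
    show Subgroup.map (HWP d).subtype ⁅Subgroup.lowerCentralSeries (⊤ : Subgroup ↥(HWP d)) 0, ⊤⁆ = HW d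
    rw [Subgroup.map_commutator, Subgroup.lowerCentralSeries_zero,
      ← MonoidHom.range_eq_map, Subgroup.range_subtype]
    exact comm_HWP d hodd
  | succ m ih =>
    show Subgroup.map (HWP d).subtype ⁅Subgroup.lowerCentralSeries (⊤ : Subgroup ↥(HWP d)) (m + 1), ⊤⁆ = HW d
    rw [Subgroup.map_commutator, ih,
      ← MonoidHom.range_eq_map, Subgroup.range_subtype, Subgroup.commutator_comm,
      comm_HWP_HW d hodd]

lemma not_nilpotent (hodd : Odd d) (hd : 3 ≤ d) : ¬ Group.IsNilpotent ↥(HWP d) := by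
  intro hnil
  obtain ⟨n, hn⟩ := _root_.nilpotent_iff_lowerCentralSeries.mp hnil
  rcases n with _ | m
  · rw [Subgroup.lowerCentralSeries_zero] at hn
    have : Subgroup.map (HWP d).subtype (⊤ : Subgroup ↥(HWP d)) = ⊥ := by
      rw [hn, Subgroup.map_bot]
    rw [← MonoidHom.range_eq_map, Subgroup.range_subtype] at this
    exact HWP_ne_bot d hodd hd this
  · have h := map_lcs d hodd m
    rw [hn, Subgroup.map_bot] at h
    exact HW_ne_bot d hodd hd h.symm

end HWPaux

/-- `HWP(d)` is solvable of derived length 3, with derived series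
`HWP(d) ⊵ HW(d) ⊵ {ω(a)·1} ⊵ {1}`; moreover `HWP(d)` is not nilpotent,
since `⁅HWP(d), HW(d)⁆ = HW(d)`. -/
theorem HWP_solvable_not_nilpotent (d : ℕ) [NeZero d] (hodd : Odd d) (hd : 3 ≤ d) :
    IsSolvable ↥(HWP d) ∧
    derivedSeries ↥(HWP d) 3 = ⊥ ∧
    derivedSeries ↥(HWP d) 2 ≠ ⊥ ∧
    ⁅HWP d, HWP d⁆ = HW d ∧
    ⁅HW d, HW d⁆ = Phases d ∧
    ⁅Phases d, Phases d⁆ = (⊥ : Subgroup (Matrix (ZMod d) (ZMod d) ℂ)ˣ) ∧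
    ¬ Group.IsNilpotent ↥(HWP d) ∧
    ⁅HWP d, HW d⁆ = HW d :=
  ⟨isSolvable_def _ |>.mpr ⟨3, HWPaux.ds_three_bot d hodd⟩, HWPaux.ds_three_bot d hodd,
    HWPaux.ds_two_ne_bot d hodd hd, HWPaux.comm_HWP d hodd, HWPaux.comm_HW d hodd,
    HWPaux.comm_Phases d hodd, HWPaux.not_nilpotent d hodd hd, HWPaux.comm_HWP_HW d hodd⟩
end
end
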